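/- Let s ∈ ℂ with s ≠ 0 and let p_1,...,p_5 ∈ ℂ[x_1,...,x_7] be the polynomials p_1 = x_5x_7 + s x_6² − s²(x_1+x_2)(x_3+x_4), p_2 = x_3x_4x_7 + s(x_1+x_2)x_1x_2 − s²x_5²x_6, p_3 = x_3x_4x_6 + s x_5³ − s²(x_1+x_2)x_7², p_4 = x_1x_2x_6 + s x_7³ − s²(x_3+x_4)x_5², p_5 = x_1x_2x_5 + s x_3x_4(x_3+x_4) − s²x_6x_7². For each k ∈ {1,2,3,4}, let e_k ∈ ℂ^7 be the k-th standard basis vector. Then for each such k: (a) p_i(e_k) = 0 for all i = 1,...,5, and (b) the 5×7 Jacobian matrix (∂p_i/∂x_j) evaluated at e_k has rank exactly 2. In particular the four coordinate points (1:0:0:0:0:0:0), (0:1:0:0:0:0:0), (0:0:1:0:0:0:0), (0:0:0:1:0:0:0) are singular points of the threefold X_s ⊂ ℙ^6 defined by p_1,...,p_5. -/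

import Mathlib

open MvPolynomial

open Matrix


lemma rank_two_aux (a b : ℂ) (ha : a ≠ 0) (hb : b ≠ 0) (r₁ r₂ : Fin 5) (hr : r₁ ≠ r₂)
    (c₁ c₂ : Fin 7) (u v : Fin 7 → ℂ)
    (hu₁ : u c₁ = a) (hv₁ : v c₁ = 0) (hu₂ : u c₂ = 0) (hv₂ : v c₂ = b) :
    (Matrix.of fun (i : Fin 5) (j : Fin 7) =>
        (if i = r₁ then u j else 0) + (if i = r₂ then v j else 0)).rank = 2 := by
  set M : Matrix (Fin 5) (Fin 7) ℂ := Matrix.of fun i j =>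
      (if i = r₁ then u j else 0) + (if i = r₂ then v j else 0) with hM
  have hfac : M = (Matrix.of fun (i : Fin 5) (t : Fin 2) =>
      (if i = ![r₁, r₂] t then (1:ℂ) else 0)) * (Matrix.of ![u, v]) := by
    ext i j
    simp [Matrix.mul_apply, Fin.sum_univ_two, hM]
    split_ifs <;> simp_all
  have hub : M.rank ≤ 2 := by
    rw [hfac]
    calc _ ≤ (Matrix.of fun (i : Fin 5) (t : Fin 2) =>
        (if i = ![r₁, r₂] t then (1:ℂ) else 0)).rank := Matrix.rank_mul_le_left _ _
      _ ≤ Fintype.card (Fin 2) := Matrix.rank_le_card_width _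
      _ = 2 := by simp
  have hw₁ : (M *ᵥ Pi.single c₁ 1) ∈ LinearMap.range M.mulVecLin := ⟨_, rfl⟩
  have hw₂ : (M *ᵥ Pi.single c₂ 1) ∈ LinearMap.range M.mulVecLin := ⟨_, rfl⟩
  have e₁ : M *ᵥ Pi.single c₁ 1 = fun i => if i = r₁ then a else 0 := by
    funext i
    simp [Matrix.mulVec_single, hM, hu₁, hv₁]
  have e₂ : M *ᵥ Pi.single c₂ 1 = fun i => if i = r₂ then b else 0 := by
    funext i
    simp [Matrix.mulVec_single, hM, hu₂, hv₂]
  rw [e₁] at hw₁; rw [e₂] at hw₂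
  have hli : LinearIndependent ℂ
      ![(fun i => if i = r₁ then a else 0 : Fin 5 → ℂ),
        (fun i => if i = r₂ then b else 0 : Fin 5 → ℂ)] := by
    rw [LinearIndependent.pair_iff]
    intro c d hcd
    have h1 := congrFun hcd r₁
    have h2 := congrFun hcd r₂
    simp [hr, hr.symm] at h1 h2
    constructor
    · rcases h1 with h | h
      · exact h
      · exact absurd h ha
    · rcases h2 with h | h
      · exact h
      · exact absurd h hb
  have hspan : Submodule.span ℂ (Set.range
      ![(fun i => if i = r₁ then a else 0 : Fin 5 → ℂ),
        (fun i => if i = r₂ then b else 0 : Fin 5 → ℂ)]) ≤ LinearMap.range M.mulVecLin := by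
    rw [Submodule.span_le]
    rintro x ⟨t, rfl⟩
    fin_cases t
    · exact hw₁
    · exact hw₂
  have hlb : 2 ≤ M.rank := by
    have h2 : Module.finrank ℂ (Submodule.span ℂ (Set.range
      ![(fun i => if i = r₁ then a else 0 : Fin 5 → ℂ),
        (fun i => if i = r₂ then b else 0 : Fin 5 → ℂ)])) = 2 := by
      rw [finrank_span_eq_card hli]
      simp
    rw [Matrix.rank, ← h2]
    exact Submodule.finrank_mono hspan
  omega

set_option maxHeartbeats 4000000 in
lemma boehm_case0 (s : ℂ) (hs : s ≠ 0) :
    (∀ i : Fin 5, eval (Pi.single (0:Fin 7) 1 : Fin 7 → ℂ) ((![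
      X 4 * X 6 + C s * X 5 ^ 2 - C (s ^ 2) * ((X 0 + X 1) * (X 2 + X 3)),
      X 2 * X 3 * X 6 + C s * ((X 0 + X 1) * X 0 * X 1) - C (s ^ 2) * (X 4 ^ 2 * X 5),
      X 2 * X 3 * X 5 + C s * X 4 ^ 3 - C (s ^ 2) * ((X 0 + X 1) * X 6 ^ 2),
      X 0 * X 1 * X 5 + C s * X 6 ^ 3 - C (s ^ 2) * ((X 2 + X 3) * X 4 ^ 2),
      X 0 * X 1 * X 4 + C s * (X 2 * X 3 * (X 2 + X 3)) - C (s ^ 2) * (X 5 * X 6 ^ 2)] :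
        Fin 5 → MvPolynomial (Fin 7) ℂ) i) = 0) ∧
    (Matrix.of fun (i : Fin 5) (j : Fin 7) =>
        eval (Pi.single (0:Fin 7) 1 : Fin 7 → ℂ) (pderiv j ((![
      X 4 * X 6 + C s * X 5 ^ 2 - C (s ^ 2) * ((X 0 + X 1) * (X 2 + X 3)),
      X 2 * X 3 * X 6 + C s * ((X 0 + X 1) * X 0 * X 1) - C (s ^ 2) * (X 4 ^ 2 * X 5),
      X 2 * X 3 * X 5 + C s * X 4 ^ 3 - C (s ^ 2) * ((X 0 + X 1) * X 6 ^ 2),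
      X 0 * X 1 * X 5 + C s * X 6 ^ 3 - C (s ^ 2) * ((X 2 + X 3) * X 4 ^ 2),
      X 0 * X 1 * X 4 + C s * (X 2 * X 3 * (X 2 + X 3)) - C (s ^ 2) * (X 5 * X 6 ^ 2)] :
        Fin 5 → MvPolynomial (Fin 7) ℂ) i))).rank = 2 := by
  constructor
  · intro i
    fin_cases i <;> simp [Pi.single_apply]
  · have hM : (Matrix.of fun (i : Fin 5) (j : Fin 7) =>
        eval (Pi.single (0:Fin 7) 1 : Fin 7 → ℂ) (pderiv j ((![
      X 4 * X 6 + C s * X 5 ^ 2 - C (s ^ 2) * ((X 0 + X 1) * (X 2 + X 3)),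
      X 2 * X 3 * X 6 + C s * ((X 0 + X 1) * X 0 * X 1) - C (s ^ 2) * (X 4 ^ 2 * X 5),
      X 2 * X 3 * X 5 + C s * X 4 ^ 3 - C (s ^ 2) * ((X 0 + X 1) * X 6 ^ 2),
      X 0 * X 1 * X 5 + C s * X 6 ^ 3 - C (s ^ 2) * ((X 2 + X 3) * X 4 ^ 2),
      X 0 * X 1 * X 4 + C s * (X 2 * X 3 * (X 2 + X 3)) - C (s ^ 2) * (X 5 * X 6 ^ 2)] :
        Fin 5 → MvPolynomial (Fin 7) ℂ) i))) =
        Matrix.of fun (i : Fin 5) (j : Fin 7) =>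
          (if i = (0:Fin 5) then (if j = 2 ∨ j = 3 then -s^2 else 0) else 0) +
          (if i = (1:Fin 5) then (if j = 1 then s else 0) else 0) := by
      ext i j
      fin_cases i <;> fin_cases j <;>
        simp [pderiv_mul, pderiv_X, pderiv_pow, Pi.single_apply]
    rw [hM]
    exact rank_two_aux (-s^2) s (neg_ne_zero.mpr (pow_ne_zero 2 hs)) hs 0 1 (by decide)
      2 1 _ _ (by simp) (by simp) (by simp) (by simp)

set_option maxHeartbeats 4000000 in
lemma boehm_case1 (s : ℂ) (hs : s ≠ 0) :
    (∀ i : Fin 5, eval (Pi.single (1:Fin 7) 1 : Fin 7 → ℂ) ((![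
      X 4 * X 6 + C s * X 5 ^ 2 - C (s ^ 2) * ((X 0 + X 1) * (X 2 + X 3)),
      X 2 * X 3 * X 6 + C s * ((X 0 + X 1) * X 0 * X 1) - C (s ^ 2) * (X 4 ^ 2 * X 5),
      X 2 * X 3 * X 5 + C s * X 4 ^ 3 - C (s ^ 2) * ((X 0 + X 1) * X 6 ^ 2),
      X 0 * X 1 * X 5 + C s * X 6 ^ 3 - C (s ^ 2) * ((X 2 + X 3) * X 4 ^ 2),
      X 0 * X 1 * X 4 + C s * (X 2 * X 3 * (X 2 + X 3)) - C (s ^ 2) * (X 5 * X 6 ^ 2)] :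
        Fin 5 → MvPolynomial (Fin 7) ℂ) i) = 0) ∧
    (Matrix.of fun (i : Fin 5) (j : Fin 7) =>
        eval (Pi.single (1:Fin 7) 1 : Fin 7 → ℂ) (pderiv j ((![
      X 4 * X 6 + C s * X 5 ^ 2 - C (s ^ 2) * ((X 0 + X 1) * (X 2 + X 3)),
      X 2 * X 3 * X 6 + C s * ((X 0 + X 1) * X 0 * X 1) - C (s ^ 2) * (X 4 ^ 2 * X 5),
      X 2 * X 3 * X 5 + C s * X 4 ^ 3 - C (s ^ 2) * ((X 0 + X 1) * X 6 ^ 2),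
      X 0 * X 1 * X 5 + C s * X 6 ^ 3 - C (s ^ 2) * ((X 2 + X 3) * X 4 ^ 2),
      X 0 * X 1 * X 4 + C s * (X 2 * X 3 * (X 2 + X 3)) - C (s ^ 2) * (X 5 * X 6 ^ 2)] :
        Fin 5 → MvPolynomial (Fin 7) ℂ) i))).rank = 2 := by
  constructor
  · intro i
    fin_cases i <;> simp [Pi.single_apply]
  · have hM : (Matrix.of fun (i : Fin 5) (j : Fin 7) =>
        eval (Pi.single (1:Fin 7) 1 : Fin 7 → ℂ) (pderiv j ((![
      X 4 * X 6 + C s * X 5 ^ 2 - C (s ^ 2) * ((X 0 + X 1) * (X 2 + X 3)),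
      X 2 * X 3 * X 6 + C s * ((X 0 + X 1) * X 0 * X 1) - C (s ^ 2) * (X 4 ^ 2 * X 5),
      X 2 * X 3 * X 5 + C s * X 4 ^ 3 - C (s ^ 2) * ((X 0 + X 1) * X 6 ^ 2),
      X 0 * X 1 * X 5 + C s * X 6 ^ 3 - C (s ^ 2) * ((X 2 + X 3) * X 4 ^ 2),
      X 0 * X 1 * X 4 + C s * (X 2 * X 3 * (X 2 + X 3)) - C (s ^ 2) * (X 5 * X 6 ^ 2)] :
        Fin 5 → MvPolynomial (Fin 7) ℂ) i))) =
        Matrix.of fun (i : Fin 5) (j : Fin 7) =>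
          (if i = (0:Fin 5) then (if j = 2 ∨ j = 3 then -s^2 else 0) else 0) +
          (if i = (1:Fin 5) then (if j = 0 then s else 0) else 0) := by
      ext i j
      fin_cases i <;> fin_cases j <;>
        simp [pderiv_mul, pderiv_X, pderiv_pow, Pi.single_apply]
    rw [hM]
    exact rank_two_aux (-s^2) s (neg_ne_zero.mpr (pow_ne_zero 2 hs)) hs 0 1 (by decide)
      2 0 _ _ (by simp) (by simp) (by simp) (by simp)

set_option maxHeartbeats 4000000 in
lemma boehm_case2 (s : ℂ) (hs : s ≠ 0) :
    (∀ i : Fin 5, eval (Pi.single (2:Fin 7) 1 : Fin 7 → ℂ) ((![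
      X 4 * X 6 + C s * X 5 ^ 2 - C (s ^ 2) * ((X 0 + X 1) * (X 2 + X 3)),
      X 2 * X 3 * X 6 + C s * ((X 0 + X 1) * X 0 * X 1) - C (s ^ 2) * (X 4 ^ 2 * X 5),
      X 2 * X 3 * X 5 + C s * X 4 ^ 3 - C (s ^ 2) * ((X 0 + X 1) * X 6 ^ 2),
      X 0 * X 1 * X 5 + C s * X 6 ^ 3 - C (s ^ 2) * ((X 2 + X 3) * X 4 ^ 2),
      X 0 * X 1 * X 4 + C s * (X 2 * X 3 * (X 2 + X 3)) - C (s ^ 2) * (X 5 * X 6 ^ 2)] :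
        Fin 5 → MvPolynomial (Fin 7) ℂ) i) = 0) ∧
    (Matrix.of fun (i : Fin 5) (j : Fin 7) =>
        eval (Pi.single (2:Fin 7) 1 : Fin 7 → ℂ) (pderiv j ((![
      X 4 * X 6 + C s * X 5 ^ 2 - C (s ^ 2) * ((X 0 + X 1) * (X 2 + X 3)),
      X 2 * X 3 * X 6 + C s * ((X 0 + X 1) * X 0 * X 1) - C (s ^ 2) * (X 4 ^ 2 * X 5),
      X 2 * X 3 * X 5 + C s * X 4 ^ 3 - C (s ^ 2) * ((X 0 + X 1) * X 6 ^ 2),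
      X 0 * X 1 * X 5 + C s * X 6 ^ 3 - C (s ^ 2) * ((X 2 + X 3) * X 4 ^ 2),
      X 0 * X 1 * X 4 + C s * (X 2 * X 3 * (X 2 + X 3)) - C (s ^ 2) * (X 5 * X 6 ^ 2)] :
        Fin 5 → MvPolynomial (Fin 7) ℂ) i))).rank = 2 := by
  constructor
  · intro i
    fin_cases i <;> simp [Pi.single_apply]
  · have hM : (Matrix.of fun (i : Fin 5) (j : Fin 7) =>
        eval (Pi.single (2:Fin 7) 1 : Fin 7 → ℂ) (pderiv j ((![
      X 4 * X 6 + C s * X 5 ^ 2 - C (s ^ 2) * ((X 0 + X 1) * (X 2 + X 3)),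
      X 2 * X 3 * X 6 + C s * ((X 0 + X 1) * X 0 * X 1) - C (s ^ 2) * (X 4 ^ 2 * X 5),
      X 2 * X 3 * X 5 + C s * X 4 ^ 3 - C (s ^ 2) * ((X 0 + X 1) * X 6 ^ 2),
      X 0 * X 1 * X 5 + C s * X 6 ^ 3 - C (s ^ 2) * ((X 2 + X 3) * X 4 ^ 2),
      X 0 * X 1 * X 4 + C s * (X 2 * X 3 * (X 2 + X 3)) - C (s ^ 2) * (X 5 * X 6 ^ 2)] :
        Fin 5 → MvPolynomial (Fin 7) ℂ) i))) =
        Matrix.of fun (i : Fin 5) (j : Fin 7) =>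
          (if i = (0:Fin 5) then (if j = 0 ∨ j = 1 then -s^2 else 0) else 0) +
          (if i = (4:Fin 5) then (if j = 3 then s else 0) else 0) := by
      ext i j
      fin_cases i <;> fin_cases j <;>
        simp [pderiv_mul, pderiv_X, pderiv_pow, Pi.single_apply]
    rw [hM]
    exact rank_two_aux (-s^2) s (neg_ne_zero.mpr (pow_ne_zero 2 hs)) hs 0 4 (by decide)
      0 3 _ _ (by simp) (by simp) (by simp) (by simp)

set_option maxHeartbeats 4000000 in
lemma boehm_case3 (s : ℂ) (hs : s ≠ 0) :
    (∀ i : Fin 5, eval (Pi.single (3:Fin 7) 1 : Fin 7 → ℂ) ((![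
      X 4 * X 6 + C s * X 5 ^ 2 - C (s ^ 2) * ((X 0 + X 1) * (X 2 + X 3)),
      X 2 * X 3 * X 6 + C s * ((X 0 + X 1) * X 0 * X 1) - C (s ^ 2) * (X 4 ^ 2 * X 5),
      X 2 * X 3 * X 5 + C s * X 4 ^ 3 - C (s ^ 2) * ((X 0 + X 1) * X 6 ^ 2),
      X 0 * X 1 * X 5 + C s * X 6 ^ 3 - C (s ^ 2) * ((X 2 + X 3) * X 4 ^ 2),
      X 0 * X 1 * X 4 + C s * (X 2 * X 3 * (X 2 + X 3)) - C (s ^ 2) * (X 5 * X 6 ^ 2)] :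
        Fin 5 → MvPolynomial (Fin 7) ℂ) i) = 0) ∧
    (Matrix.of fun (i : Fin 5) (j : Fin 7) =>
        eval (Pi.single (3:Fin 7) 1 : Fin 7 → ℂ) (pderiv j ((![
      X 4 * X 6 + C s * X 5 ^ 2 - C (s ^ 2) * ((X 0 + X 1) * (X 2 + X 3)),
      X 2 * X 3 * X 6 + C s * ((X 0 + X 1) * X 0 * X 1) - C (s ^ 2) * (X 4 ^ 2 * X 5),
      X 2 * X 3 * X 5 + C s * X 4 ^ 3 - C (s ^ 2) * ((X 0 + X 1) * X 6 ^ 2),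
      X 0 * X 1 * X 5 + C s * X 6 ^ 3 - C (s ^ 2) * ((X 2 + X 3) * X 4 ^ 2),
      X 0 * X 1 * X 4 + C s * (X 2 * X 3 * (X 2 + X 3)) - C (s ^ 2) * (X 5 * X 6 ^ 2)] :
        Fin 5 → MvPolynomial (Fin 7) ℂ) i))).rank = 2 := by
  constructor
  · intro i
    fin_cases i <;> simp [Pi.single_apply]
  · have hM : (Matrix.of fun (i : Fin 5) (j : Fin 7) =>
        eval (Pi.single (3:Fin 7) 1 : Fin 7 → ℂ) (pderiv j ((![
      X 4 * X 6 + C s * X 5 ^ 2 - C (s ^ 2) * ((X 0 + X 1) * (X 2 + X 3)),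
      X 2 * X 3 * X 6 + C s * ((X 0 + X 1) * X 0 * X 1) - C (s ^ 2) * (X 4 ^ 2 * X 5),
      X 2 * X 3 * X 5 + C s * X 4 ^ 3 - C (s ^ 2) * ((X 0 + X 1) * X 6 ^ 2),
      X 0 * X 1 * X 5 + C s * X 6 ^ 3 - C (s ^ 2) * ((X 2 + X 3) * X 4 ^ 2),
      X 0 * X 1 * X 4 + C s * (X 2 * X 3 * (X 2 + X 3)) - C (s ^ 2) * (X 5 * X 6 ^ 2)] :
        Fin 5 → MvPolynomial (Fin 7) ℂ) i))) =
        Matrix.of fun (i : Fin 5) (j : Fin 7) =>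
          (if i = (0:Fin 5) then (if j = 0 ∨ j = 1 then -s^2 else 0) else 0) +
          (if i = (4:Fin 5) then (if j = 2 then s else 0) else 0) := by
      ext i j
      fin_cases i <;> fin_cases j <;>
        simp [pderiv_mul, pderiv_X, pderiv_pow, Pi.single_apply]
    rw [hM]
    exact rank_two_aux (-s^2) s (neg_ne_zero.mpr (pow_ne_zero 2 hs)) hs 0 4 (by decide)
      0 2 _ _ (by simp) (by simp) (by simp) (by simp)

set_option maxHeartbeats 1000000 in
/-- Let `p₁,…,p₅` be the defining equations of the one-parameter Böhm
subfamily `X_s ⊂ ℙ⁶` (with `s ≠ 0`; variables indexed by `Fin 7`, `xⱼ = X (j−1)`). For each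
of the first four standard basis vectors `e_k` of `ℂ⁷`, all `pᵢ` vanish at `e_k` and the
`5×7` Jacobian matrix of the `pᵢ` at `e_k` has rank exactly 2; in particular the coordinate
points `(1:0:0:0:0:0:0)`, `(0:1:0:0:0:0:0)`, `(0:0:1:0:0:0:0)`, `(0:0:0:1:0:0:0)` are
singular points of the threefold `X_s ⊂ ℙ⁶`. -/
theorem boehm_coordinate_singular_points (s : ℂ) (hs : s ≠ 0)
    (p : Fin 5 → MvPolynomial (Fin 7) ℂ)
    (hp : p = ![
      X 4 * X 6 + C s * X 5 ^ 2 - C (s ^ 2) * ((X 0 + X 1) * (X 2 + X 3)),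
      X 2 * X 3 * X 6 + C s * ((X 0 + X 1) * X 0 * X 1) - C (s ^ 2) * (X 4 ^ 2 * X 5),
      X 2 * X 3 * X 5 + C s * X 4 ^ 3 - C (s ^ 2) * ((X 0 + X 1) * X 6 ^ 2),
      X 0 * X 1 * X 5 + C s * X 6 ^ 3 - C (s ^ 2) * ((X 2 + X 3) * X 4 ^ 2),
      X 0 * X 1 * X 4 + C s * (X 2 * X 3 * (X 2 + X 3)) - C (s ^ 2) * (X 5 * X 6 ^ 2)]) :
    ∀ k : Fin 7, (k : ℕ) < 4 →
      (∀ i : Fin 5, eval (Pi.single k 1 : Fin 7 → ℂ) (p i) = 0) ∧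
      (Matrix.of fun (i : Fin 5) (j : Fin 7) =>
          eval (Pi.single k 1 : Fin 7 → ℂ) (pderiv j (p i))).rank = 2 := by
  
  subst hp
  intro k hk
  fin_cases k
  · exact boehm_case0 s hs
  · exact boehm_case1 s hs
  · exact boehm_case2 s hs
  · exact boehm_case3 s hs
  · exact absurd hk (by decide)
  · exact absurd hk (by decide)
  · exact absurd hk (by decide)
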